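/- Let e and q be coprime integers with 2 ≤ e < q. Then the sum of all Weierstrass gaps for (e,q) equals e·q·(e−1)·(q−1)/4 − (e²−1)·(q²−1)/12; equivalently, 12 times the sum of all gaps equals (e−1)·(q−1)·(2·e·q − e − q − 1). -/

import Mathlib

open Finset

private lemma gauss1 (n : ℕ) : 2 * ∑ k ∈ Finset.range n, (k : ℤ) = n * (n - 1) := by
  induction n with
  | zero => simp
  | succ n ih =>
    rw [Finset.sum_range_succ]
    push_cast
    push_cast at ih
    linear_combination ih

private lemma gauss2 (n : ℕ) : 6 * ∑ k ∈ Finset.range n, (k : ℤ) ^ 2 = n * (n - 1) * (2 * n - 1) := by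
  induction n with
  | zero => simp
  | succ n ih =>
    rw [Finset.sum_range_succ]
    push_cast
    push_cast at ih
    linear_combination ih

private lemma innerSum (e c : ℤ) (n : ℕ) :
    2 * ∑ j ∈ Finset.Ico 1 (n + 1), (c - (j : ℤ) * e) = 2 * n * c - e * n * (n + 1) := by
  induction n with
  | zero => simp
  | succ n ih =>
    rw [Finset.sum_Ico_succ_top (by omega)]
    push_cast
    push_cast at ih
    linear_combination ih

/-- cancellation of `q` mod `e` over the integers -/
private lemma keyCancel (e q k k' : ℕ) (hcop : Nat.Coprime e q) (he : 0 < e)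
    (hk : k < e) (hk' : k' < e) (j j' : ℤ)
    (h : (k : ℤ) * q - j * e = (k' : ℤ) * q - j' * e) : k = k' ∧ j = j' := by
  have hcop' : IsCoprime (e : ℤ) (q : ℤ) := Nat.isCoprime_iff_coprime.mpr hcop
  have hd : (e : ℤ) ∣ ((k : ℤ) - k') * q := ⟨j - j', by linear_combination h⟩
  have hdk : (e : ℤ) ∣ ((k : ℤ) - k') := hcop'.dvd_of_dvd_mul_right hd
  have habs : |(k : ℤ) - k'| < e := by rw [abs_lt]; omega
  have hz : (k : ℤ) - k' = 0 := Int.eq_zero_of_abs_lt_dvd hdk habs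
  have hkk : k = k' := by omega
  refine ⟨hkk, ?_⟩
  subst hkk
  have he' : (e : ℤ) ≠ 0 := by positivity
  have : j * e = j' * e := by linarith
  exact mul_right_cancel₀ he' this

private lemma permSum (e q : ℕ) (he : 0 < e) (hcop : Nat.Coprime q e) (g : ℕ → ℤ) :
    ∑ k ∈ Finset.range e, g (k * q % e) = ∑ k ∈ Finset.range e, g k := by
  have hinj : ∀ a ∈ Finset.range e, ∀ b ∈ Finset.range e,
      a * q % e = b * q % e → a = b := by
    intro a ha b hb hab
    simp only [Finset.mem_range] at ha hb
    have h1 : a * q ≡ b * q [MOD e] := hab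
    have h2 : a ≡ b [MOD e] := Nat.ModEq.cancel_right_of_coprime hcop.symm h1
    have h3 : a % e = b % e := h2
    rw [Nat.mod_eq_of_lt ha, Nat.mod_eq_of_lt hb] at h3
    exact h3
  have himg : Finset.image (fun k => k * q % e) (Finset.range e) = Finset.range e := by
    apply Finset.eq_of_subset_of_card_le
    · intro x hx
      simp only [Finset.mem_image, Finset.mem_range] at hx ⊢
      obtain ⟨k, _, rfl⟩ := hx
      exact Nat.mod_lt _ he
    · rw [Finset.card_image_of_injOn fun a ha b hb => hinj a ha b hb]
  conv_rhs => rw [← himg]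
  exact (Finset.sum_image hinj).symm

theorem stmt8 (e q : ℕ) (he : 2 ≤ e) (hq : e < q) (hcop : Nat.Coprime e q)
    (S : ℕ) (hS : S = ∑ᶠ n ∈ {n : ℕ | ¬ ∃ m k : ℕ, n = m * e + k * q}, n) :
    S = e * q * (e - 1) * (q - 1) / 4 - (e ^ 2 - 1) * (q ^ 2 - 1) / 12 ∧
    12 * S = (e - 1) * (q - 1) * (2 * e * q - e - q - 1) := by
  have he0 : 0 < e := by omega
  -- the finset of gaps
  set D : Finset ((_ : ℕ) × ℕ) :=
    (Finset.Ico 1 e).sigma (fun k => Finset.Ico 1 (k * q / e + 1)) with hD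
  set f : ((_ : ℕ) × ℕ) → ℕ := fun p => p.1 * q - p.2 * e with hf
  have hmemD : ∀ p : ((_ : ℕ) × ℕ), p ∈ D ↔
      (1 ≤ p.1 ∧ p.1 < e) ∧ (1 ≤ p.2 ∧ p.2 * e ≤ p.1 * q) := by
    intro p
    rw [hD, Finset.mem_sigma, Finset.mem_Ico, Finset.mem_Ico]
    constructor
    · rintro ⟨⟨h1, h2⟩, h3, h4⟩
      exact ⟨⟨h1, h2⟩, h3, (Nat.le_div_iff_mul_le he0).mp (by omega)⟩
    · rintro ⟨⟨h1, h2⟩, h3, h4⟩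
      refine ⟨⟨h1, h2⟩, h3, ?_⟩
      have := (Nat.le_div_iff_mul_le he0).mpr h4
      omega
  -- set characterization
  have hset : {n : ℕ | ¬ ∃ m k : ℕ, n = m * e + k * q} = ↑(D.image f) := by
    ext n
    simp only [Set.mem_setOf_eq, Finset.coe_image, Set.mem_image, Finset.mem_coe]
    constructor
    · intro hgap
      obtain ⟨q', -, hq'⟩ := Nat.exists_mul_mod_eq_one_of_coprime hcop.symm (by omega)
      set k₀ := n * q' % e with hk₀
      have hmod : k₀ * q ≡ n [MOD e] := by
        calc k₀ * q ≡ n * q' * q [MOD e] := Nat.ModEq.mul_right q (Nat.mod_modEq _ _)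
        _ = n * (q * q') := by ring
        _ ≡ n * 1 [MOD e] := by
              have hqq : q * q' ≡ 1 [MOD e] := by
                show q * q' % e = 1 % e
                rw [hq', Nat.mod_eq_of_lt (show 1 < e by omega)]
              exact Nat.ModEq.mul_left n hqq
        _ = n := by ring
      have hlt : n < k₀ * q := by
        by_contra hle
        push_neg at hle
        obtain ⟨m, hm⟩ := (Nat.modEq_iff_dvd' hle).mp hmod
        exact hgap ⟨m, k₀, by rw [Nat.eq_add_of_sub_eq hle hm]; ring⟩
      have hk₀lt : k₀ < e := Nat.mod_lt _ he0
      have hk₀pos : 1 ≤ k₀ := by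
        rcases Nat.eq_zero_or_pos k₀ with h0 | h; · rw [h0] at hlt; simp at hlt
        exact h
      obtain ⟨j, hj0⟩ := (Nat.modEq_iff_dvd' hlt.le).mp hmod.symm
      have hj : k₀ * q - n = j * e := by rw [hj0]; ring
      have hjpos : 1 ≤ j := by
        rcases Nat.eq_zero_or_pos j with h0 | h
        · rw [h0, Nat.zero_mul] at hj; omega
        · exact h
      refine ⟨⟨k₀, j⟩, (hmemD _).mpr ⟨⟨hk₀pos, hk₀lt⟩, hjpos, ?_⟩, ?_⟩
      · simp only; omega
      · simp only [hf]; omega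
    · rintro ⟨⟨k, j⟩, hp, rfl⟩
      obtain ⟨⟨hk1, hk2⟩, hj1, hj2⟩ := (hmemD _).mp hp
      simp only at hk1 hk2 hj1 hj2
      rintro ⟨m, k', hrep⟩
      simp only [hf] at hrep
      -- k' * q ≤ k * q - j * e < k * q
      have hn_lt : m * e + k' * q < k * q := by
        have : 0 < j * e := by positivity
        omega
      have hk'lt : k' < e := by
        by_contra hge
        push_neg at hge
        have h5 : e * q ≤ k' * q := mul_le_mul_left hge q
        have h6 : k * q < e * q := (Nat.mul_lt_mul_right (show 0 < q by omega)).mpr hk2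
        omega
      have hz : (k : ℤ) * q - (j : ℤ) * e = (k' : ℤ) * q - (-(m : ℤ)) * e := by
        have hcast : ((k * q - j * e : ℕ) : ℤ) = (k : ℤ) * q - (j : ℤ) * e := by
          push_cast [Nat.cast_sub hj2]; ring
        have : ((m * e + k' * q : ℕ) : ℤ) = (k : ℤ) * q - (j : ℤ) * e := by
          rw [← hrep, hcast]
        push_cast at this
        linarith
      obtain ⟨hkk', hjj'⟩ := keyCancel e q k k' hcop he0 hk2 hk'lt _ _ hz
      have : (j : ℤ) = -(m : ℤ) := hjj'
      have : (j : ℤ) ≥ 1 := by exact_mod_cast hj1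
      omega
  -- turn the finsum into a finset sum
  have hinjD : ∀ x ∈ D, ∀ y ∈ D, f x = f y → x = y := by
    rintro ⟨k, j⟩ hx ⟨k', j'⟩ hy hxy
    obtain ⟨⟨hk1, hk2⟩, hj1, hj2⟩ := (hmemD _).mp hx
    obtain ⟨⟨hk1', hk2'⟩, hj1', hj2'⟩ := (hmemD _).mp hy
    simp only at hk1 hk2 hj1 hj2 hk1' hk2' hj1' hj2'
    simp only [hf] at hxy
    have hz : (k : ℤ) * q - (j : ℤ) * e = (k' : ℤ) * q - (j' : ℤ) * e := by
      have h1 : ((k * q - j * e : ℕ) : ℤ) = (k : ℤ) * q - (j : ℤ) * e := by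
        push_cast [Nat.cast_sub hj2]; ring
      have h2 : ((k' * q - j' * e : ℕ) : ℤ) = (k' : ℤ) * q - (j' : ℤ) * e := by
        push_cast [Nat.cast_sub hj2']; ring
      rw [← h1, ← h2, hxy]
    obtain ⟨hkk', hjj'⟩ := keyCancel e q k k' hcop he0 hk2 hk2' _ _ hz
    have : j = j' := by exact_mod_cast hjj'
    subst hkk' this
    rfl
  have hSsum : S = ∑ p ∈ D, f p := by
    rw [hS, hset, finsum_mem_coe_finset, Finset.sum_image hinjD]
  -- main computation over ℤ
  have hmain : 12 * (S : ℤ) = ((e : ℤ) - 1) * ((q : ℤ) - 1) * (2 * e * q - e - q - 1) := by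
    have hcastsum : (S : ℤ) = ∑ k ∈ Finset.Ico 1 e, ∑ j ∈ Finset.Ico 1 (k * q / e + 1),
        ((k : ℤ) * q - (j : ℤ) * e) := by
      rw [hSsum, hD, Finset.sum_sigma]
      push_cast
      refine Finset.sum_congr rfl fun k hk => Finset.sum_congr rfl fun j hj => ?_
      simp only [Finset.mem_Ico] at hk hj
      have hje : j * e ≤ k * q := (Nat.le_div_iff_mul_le he0).mp (by omega)
      simp only [hf]
      push_cast [Nat.cast_sub hje]
      ring
    -- 2 * inner sum
    have h2S : 2 * (S : ℤ) = ∑ k ∈ Finset.Ico 1 e,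
        (2 * (k * q / e : ℕ) * ((k : ℤ) * q) - e * (k * q / e : ℕ) * ((k * q / e : ℕ) + 1)) := by
      rw [hcastsum, Finset.mul_sum]
      refine Finset.sum_congr rfl fun k hk => ?_
      exact innerSum (e : ℤ) ((k : ℤ) * q) (k * q / e)
    -- multiply by e and substitute k*q = e*(k*q/e) + (k*q % e)
    have h2eS : 2 * (e : ℤ) * (S : ℤ) = ∑ k ∈ Finset.Ico 1 e,
        (((k : ℤ) * q) ^ 2 - ((k * q % e : ℕ) : ℤ) ^ 2 - e * (k * q) + e * ((k * q % e : ℕ) : ℤ)) := by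
      have : 2 * (e : ℤ) * (S : ℤ) = (e : ℤ) * (2 * (S : ℤ)) := by ring
      rw [this, h2S, Finset.mul_sum]
      refine Finset.sum_congr rfl fun k hk => ?_
      have hdm : (e : ℤ) * ((k * q / e : ℕ) : ℤ) + ((k * q % e : ℕ) : ℤ) = (k : ℤ) * q := by
        exact_mod_cast congrArg (Nat.cast : ℕ → ℤ) (Nat.div_add_mod (k * q) e)
      linear_combination (((k * q % e : ℕ) : ℤ) + (k : ℤ) * q - (e : ℤ) * ((k * q / e : ℕ) : ℤ) - e) * hdm
    -- extend to range e (k = 0 term vanishes)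
    have hrange : 2 * (e : ℤ) * (S : ℤ) = ∑ k ∈ Finset.range e,
        (((k : ℤ) * q) ^ 2 - ((k * q % e : ℕ) : ℤ) ^ 2 - e * (k * q) + e * ((k * q % e : ℕ) : ℤ)) := by
      rw [h2eS, Finset.range_eq_Ico, Finset.sum_eq_sum_Ico_succ_bot (by omega : 0 < e)]
      simp
    have hterm : ∑ k ∈ Finset.range e,
        (((k : ℤ) * q) ^ 2 - ((k * q % e : ℕ) : ℤ) ^ 2 - e * (k * q) + e * ((k * q % e : ℕ) : ℤ)) =
        ∑ k ∈ Finset.range e, ((q : ℤ) ^ 2 * (k : ℤ) ^ 2 - (e : ℤ) * q * k) +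
        ∑ k ∈ Finset.range e, ((e : ℤ) * ((k * q % e : ℕ) : ℤ) - ((k * q % e : ℕ) : ℤ) ^ 2) := by
      rw [← Finset.sum_add_distrib]
      exact Finset.sum_congr rfl fun k _ => by ring
    have hperm' : ∑ k ∈ Finset.range e, ((e : ℤ) * ((k * q % e : ℕ) : ℤ) - ((k * q % e : ℕ) : ℤ) ^ 2) =
        ∑ k ∈ Finset.range e, ((e : ℤ) * (k : ℤ) - (k : ℤ) ^ 2) := by
      exact permSum e q he0 hcop.symm (fun m => (e : ℤ) * (m : ℤ) - (m : ℤ) ^ 2)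
    have h1 : ∑ k ∈ Finset.range e, ((q : ℤ) ^ 2 * (k : ℤ) ^ 2 - (e : ℤ) * q * k) =
        (q : ℤ) ^ 2 * (∑ k ∈ Finset.range e, (k : ℤ) ^ 2) - (e : ℤ) * q * (∑ k ∈ Finset.range e, (k : ℤ)) := by
      rw [Finset.sum_sub_distrib, ← Finset.mul_sum, ← Finset.mul_sum]
    have h2 : ∑ k ∈ Finset.range e, ((e : ℤ) * (k : ℤ) - (k : ℤ) ^ 2) =
        (e : ℤ) * (∑ k ∈ Finset.range e, (k : ℤ)) - (∑ k ∈ Finset.range e, (k : ℤ) ^ 2) := by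
      rw [Finset.sum_sub_distrib, ← Finset.mul_sum]
    have hA := gauss2 e
    have hB := gauss1 e
    have hfinal : 12 * (S : ℤ) * (e : ℤ) =
        ((e : ℤ) - 1) * ((q : ℤ) - 1) * (2 * e * q - e - q - 1) * e := by
      linear_combination 6 * hrange + 6 * hterm + 6 * hperm' + 6 * h1 + 6 * h2 +
        ((q : ℤ) ^ 2 - 1) * hA + 3 * ((e : ℤ) - (e : ℤ) * q) * hB
    have heZ : (e : ℤ) ≠ 0 := by positivity
    exact mul_right_cancel₀ heZ hfinal
  -- deduce the natural number statements
  have h1e : 1 ≤ e := by omega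
  have h1q : 1 ≤ q := by omega
  have heq2 : e + q + 1 ≤ 2 * e * q := by nlinarith
  have hi1 : e ≤ 2 * e * q := by nlinarith
  have hi2 : q ≤ 2 * e * q - e := by omega
  have hi3 : 1 ≤ 2 * e * q - e - q := by omega
  have hconj2 : 12 * S = (e - 1) * (q - 1) * (2 * e * q - e - q - 1) := by
    zify [h1e, h1q, hi1, hi2, hi3]
    linear_combination hmain
  refine ⟨?_, hconj2⟩
  -- divisibility facts
  have evenPred : ∀ n : ℕ, ∃ a, n * (n - 1) = 2 * a := by
    intro n
    rcases Nat.even_or_odd n with ⟨c, hc⟩ | ⟨c, hc⟩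
    · exact ⟨c * (n - 1), by rw [hc]; ring⟩
    · refine ⟨n * c, ?_⟩
      have hn1 : n - 1 = 2 * c := by omega
      rw [hn1]; ring
  have hP : 4 ∣ e * q * (e - 1) * (q - 1) := by
    obtain ⟨a, ha⟩ := evenPred e
    obtain ⟨b, hb⟩ := evenPred q
    refine ⟨a * b, ?_⟩
    calc e * q * (e - 1) * (q - 1) = (e * (e - 1)) * (q * (q - 1)) := by ring
    _ = (2 * a) * (2 * b) := by rw [ha, hb]
    _ = 4 * (a * b) := by ring
  have threeDvd : ∀ n : ℕ, ¬ 3 ∣ n → 3 ∣ n ^ 2 - 1 := by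
    intro n hn
    have hmod : n % 3 = 1 ∨ n % 3 = 2 := by omega
    rcases hmod with h | h
    · obtain ⟨m, hm⟩ : ∃ m, n = 3 * m + 1 := ⟨n / 3, by omega⟩
      have hsq : n ^ 2 = 9 * m ^ 2 + 6 * m + 1 := by rw [hm]; ring
      exact ⟨3 * m ^ 2 + 2 * m, by omega⟩
    · obtain ⟨m, hm⟩ : ∃ m, n = 3 * m + 2 := ⟨n / 3, by omega⟩
      have hsq : n ^ 2 = 9 * m ^ 2 + 12 * m + 4 := by rw [hm]; ring
      exact ⟨3 * m ^ 2 + 4 * m + 1, by omega⟩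
  have fourDvd : ∀ n : ℕ, ¬ 2 ∣ n → 4 ∣ n ^ 2 - 1 := by
    intro n hn
    obtain ⟨m, hm⟩ : ∃ m, n = 2 * m + 1 := ⟨n / 2, by omega⟩
    have hsq : n ^ 2 = 4 * m ^ 2 + 4 * m + 1 := by rw [hm]; ring
    exact ⟨m ^ 2 + m, by omega⟩
  have hnotboth : ∀ d : ℕ, d ∣ e → d ∣ q → d ∣ 1 := fun d h1 h2 => hcop ▸ Nat.dvd_gcd h1 h2
  have h3dvd : 3 ∣ (e ^ 2 - 1) * (q ^ 2 - 1) := by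
    by_cases h3e : 3 ∣ e
    · have h3q : ¬ 3 ∣ q := fun h => by have := hnotboth 3 h3e h; omega
      exact (threeDvd q h3q).mul_left _
    · exact (threeDvd e h3e).mul_right _
  have h4dvd : 4 ∣ (e ^ 2 - 1) * (q ^ 2 - 1) := by
    by_cases h2e : 2 ∣ e
    · have h2q : ¬ 2 ∣ q := fun h => by have := hnotboth 2 h2e h; omega
      exact (fourDvd q h2q).mul_left _
    · exact (fourDvd e h2e).mul_right _
  have hQ : 12 ∣ (e ^ 2 - 1) * (q ^ 2 - 1) := by
    have := Nat.Coprime.mul_dvd_of_dvd_of_dvd (show Nat.Coprime 3 4 by decide) h3dvd h4dvd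
    simpa using this
  have h1e2 : 1 ≤ e ^ 2 := Nat.one_le_pow 2 e (by omega)
  have h1q2 : 1 ≤ q ^ 2 := Nat.one_le_pow 2 q (by omega)
  have h3PQ : 3 * (e * q * (e - 1) * (q - 1)) = 12 * S + (e ^ 2 - 1) * (q ^ 2 - 1) := by
    zify [h1e, h1q, h1e2, h1q2]
    linear_combination -hmain
  set P := e * q * (e - 1) * (q - 1) with hPdef
  set Q := (e ^ 2 - 1) * (q ^ 2 - 1) with hQdef
  omega
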